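/- Let π be a group, let b, b' ∈ π and let S, S' ⊆ π. Then the index of H_{b,S} ∩ H_{b',S'} in H_{b,S} equals the index of Z(S) ∩ Z(S') ∩ Z({b'⁻¹ b}) in Z(S). -/

import Mathlib

/-- The subgroup `H_{b,S} = {(a, b a b⁻¹) : a ∈ Z(S)}` of `π × π`. -/
def Hsub {π : Type*} [Group π] (b : π) (S : Set π) : Subgroup (π × π) :=
  Subgroup.map ((MonoidHom.id π).prod (MulAut.conj b).toMonoidHom)
    (Subgroup.centralizer S)

theorem comap_Hsub {π : Type*} [Group π] (b b' : π) (S : Set π) :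
    (Hsub b' S).comap ((MonoidHom.id π).prod (MulAut.conj b).toMonoidHom) =
      Subgroup.centralizer S ⊓ Subgroup.centralizer {b'⁻¹ * b} := by
  ext a
  simp only [Hsub, Subgroup.mem_comap, Subgroup.mem_map, MonoidHom.prod_apply,
    MonoidHom.id_apply, MulEquiv.coe_toMonoidHom, MulAut.conj_apply, Prod.ext_iff,
    Subgroup.mem_inf, Subgroup.mem_centralizer_iff, Set.mem_singleton_iff]
  constructor
  · rintro ⟨c, hc, rfl, h2⟩
    refine ⟨hc, fun g hg => ?_⟩
    subst hg
    calc b'⁻¹ * b * c = b'⁻¹ * (b * c * b⁻¹) * b := by group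
      _ = b'⁻¹ * (b' * c * b'⁻¹) * b := by rw [← h2]
      _ = c * (b'⁻¹ * b) := by group
  · rintro ⟨h1, h2⟩
    refine ⟨a, h1, rfl, ?_⟩
    have := h2 (b'⁻¹ * b) rfl
    show b' * a * b'⁻¹ = b * a * b⁻¹
    calc b' * a * b'⁻¹ = b' * (a * (b'⁻¹ * b)) * b⁻¹ := by group
      _ = b' * ((b'⁻¹ * b) * a) * b⁻¹ := by rw [this]
      _ = b * a * b⁻¹ := by group

/-- The index of `H_{b,S} ∩ H_{b',S'}` in `H_{b,S}` equals the index of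
`Z(S) ∩ Z(S') ∩ Z({b'⁻¹ b})` in `Z(S)`. -/
theorem stmt17 {π : Type*} [Group π] (b b' : π) (S S' : Set π) :
    (Hsub b S ⊓ Hsub b' S').relIndex (Hsub b S) =
      (Subgroup.centralizer S ⊓ Subgroup.centralizer S' ⊓
          Subgroup.centralizer {b'⁻¹ * b}).relIndex (Subgroup.centralizer S) := by
  have key : Hsub b S = Subgroup.map ((MonoidHom.id π).prod (MulAut.conj b).toMonoidHom)
      (Subgroup.centralizer S) := rfl
  rw [key, ← Subgroup.relIndex_comap, Subgroup.comap_inf, ← key, comap_Hsub b b' S',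
    comap_Hsub b b S]
  congr 1
  have : Subgroup.centralizer ({b⁻¹ * b} : Set π) = ⊤ := by
    rw [inv_mul_cancel]
    ext x
    simp [Subgroup.mem_centralizer_iff]
  rw [this, inf_top_eq, ← inf_assoc]
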